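/- For natural numbers k, δ and ε ∈ [0,1], the Mode 3 average code length ∑_{r=0}^{δ}(k+δ)·f(r;k+δ,ε) + ∑_{r=δ+1}^{k+δ}(r+k)·f(r;k+δ,ε) equals ∑_{r=0}^{δ}(δ−r)·f(r;k+δ,ε) + k + ε(k+δ), where f(r;m,ε)=C(m,r)(1-ε)^{m-r}ε^r. -/

import Mathlib

lemma binom_sum_one (n : ℕ) (ε : ℝ) :
    ∑ r ∈ Finset.range (n + 1), ((n.choose r : ℝ) * (1 - ε) ^ (n - r) * ε ^ r) = 1 := by
  calc ∑ r ∈ Finset.range (n + 1), ((n.choose r : ℝ) * (1 - ε) ^ (n - r) * ε ^ r)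
      = ∑ r ∈ Finset.range (n + 1), ε ^ r * (1 - ε) ^ (n - r) * (n.choose r : ℝ) :=
        Finset.sum_congr rfl (fun r _ => by ring)
    _ = (ε + (1 - ε)) ^ n := (add_pow ε (1 - ε) n).symm
    _ = 1 := by simp

lemma binom_mean (n : ℕ) (ε : ℝ) :
    ∑ r ∈ Finset.range (n + 1),
      (r : ℝ) * ((n.choose r : ℝ) * (1 - ε) ^ (n - r) * ε ^ r) = ε * n := by
  cases n with
  | zero => simp
  | succ m =>
    rw [Finset.sum_range_succ']
    simp only [Nat.cast_zero, zero_mul, add_zero]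
    have key : ∀ s ∈ Finset.range (m + 1),
        ((s : ℝ) + 1) * (((m + 1).choose (s + 1) : ℝ) * (1 - ε) ^ (m + 1 - (s + 1)) * ε ^ (s + 1))
        = (ε * (m + 1)) * ((m.choose s : ℝ) * (1 - ε) ^ (m - s) * ε ^ s) := by
      intro s hs
      have h1 : (s + 1) * ((m + 1).choose (s + 1)) = (m + 1) * m.choose s := by
        rw [mul_comm]
        exact (Nat.add_one_mul_choose_eq m s).symm
      have h1' : ((s : ℝ) + 1) * (((m + 1).choose (s + 1) : ℝ)) = ((m : ℝ) + 1) * (m.choose s : ℝ) := by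
        exact_mod_cast congrArg (Nat.cast : ℕ → ℝ) h1
      have h2 : m + 1 - (s + 1) = m - s := by omega
      rw [h2, pow_succ]
      push_cast
      linear_combination (1 - ε) ^ (m - s) * ε ^ s * ε * h1'
    rw [Finset.sum_congr rfl (fun s hs => by
      simpa using key s hs)]
    rw [← Finset.mul_sum, binom_sum_one m ε]
    push_cast
    ring

theorem stmt7 (k δ : ℕ) (ε : ℝ) (hε0 : 0 ≤ ε) (hε1 : ε ≤ 1) :
    (∑ r ∈ Finset.range (δ + 1),
        ((k : ℝ) + δ) * (((k + δ).choose r : ℝ) * (1 - ε) ^ (k + δ - r) * ε ^ r)) +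
      ∑ r ∈ Finset.Icc (δ + 1) (k + δ),
        ((r : ℝ) + k) * (((k + δ).choose r : ℝ) * (1 - ε) ^ (k + δ - r) * ε ^ r)
    = (∑ r ∈ Finset.range (δ + 1),
        ((δ : ℝ) - r) * (((k + δ).choose r : ℝ) * (1 - ε) ^ (k + δ - r) * ε ^ r)) +
      (k : ℝ) + ε * ((k : ℝ) + δ) := by
  set f : ℕ → ℝ := fun r => ((k + δ).choose r : ℝ) * (1 - ε) ^ (k + δ - r) * ε ^ r with hf
  have split : ∀ r : ℕ, ((k : ℝ) + δ) * f r = ((δ : ℝ) - r) * f r + ((r : ℝ) + k) * f r := by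
    intro r; ring
  have h1 : (∑ r ∈ Finset.range (δ + 1), ((k : ℝ) + δ) * f r)
      = (∑ r ∈ Finset.range (δ + 1), ((δ : ℝ) - r) * f r)
        + ∑ r ∈ Finset.range (δ + 1), ((r : ℝ) + k) * f r := by
    rw [← Finset.sum_add_distrib]
    exact Finset.sum_congr rfl (fun r _ => split r)
  have hIcc : Finset.Icc (δ + 1) (k + δ) = Finset.Ico (δ + 1) (k + δ + 1) := by
    rw [Finset.Ico_add_one_right_eq_Icc]
  have hcomb : (∑ r ∈ Finset.range (δ + 1), ((r : ℝ) + k) * f r)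
      + ∑ r ∈ Finset.Icc (δ + 1) (k + δ), ((r : ℝ) + k) * f r
      = ∑ r ∈ Finset.range (k + δ + 1), ((r : ℝ) + k) * f r := by
    rw [hIcc, Finset.range_eq_Ico, Finset.range_eq_Ico]
    exact Finset.sum_Ico_consecutive (fun r => ((r : ℝ) + k) * f r) (m := 0) (n := δ + 1) (k := k + δ + 1) (by omega) (by omega)
  have htot : ∑ r ∈ Finset.range (k + δ + 1), ((r : ℝ) + k) * f r
      = ε * ((k : ℝ) + δ) + k := by
    have : ∀ r : ℕ, ((r : ℝ) + k) * f r = (r : ℝ) * f r + (k : ℝ) * f r := fun r => by ring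
    rw [Finset.sum_congr rfl (fun r _ => this r), Finset.sum_add_distrib,
      ← Finset.mul_sum, binom_mean (k + δ) ε, binom_sum_one (k + δ) ε]
    push_cast; ring
  rw [h1, add_assoc, hcomb, htot]
  ring
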